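/- Let L be an orthomodular lattice and n ≥ 3. The n-Go equation holds for all elements of L if and only if for all a₁, b₁, a₂, b₂, …, aₙ, bₙ ∈ L satisfying the cyclic orthogonality conditions a₁ ⊥ b₁, b₁ ⊥ a₂, a₂ ⊥ b₂, b₂ ⊥ a₃, …, aₙ ⊥ bₙ, bₙ ⊥ a₁, one has (a₁ ⊔ b₁) ⊓ (a₂ ⊔ b₂) ⊓ ⋯ ⊓ (aₙ ⊔ bₙ) ≤ b₁ ⊔ a₂. -/

import Mathlib

/-- An ortholattice: a bounded lattice with an orthocomplementation. -/
class Ortholattice (α : Type*) extends Lattice α, BoundedOrder α, Compl α where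
  compl_compl : ∀ a : α, aᶜᶜ = a
  compl_le_compl : ∀ a b : α, a ≤ b → bᶜ ≤ aᶜ
  inf_compl_self : ∀ a : α, a ⊓ aᶜ = ⊥
  sup_compl_self : ∀ a : α, a ⊔ aᶜ = ⊤

/-- The Sasaki hook `a → b := a' ⊔ (a ⊓ b)`. -/
def sasaki {α : Type*} [Ortholattice α] (a b : α) : α := aᶜ ⊔ (a ⊓ b)

/-- The Godowski identity `a₁ ≡γ aₙ = (a₁→a₂) ⊓ ⋯ ⊓ (aₙ₋₁→aₙ) ⊓ (aₙ→a₁)`. -/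
def goFwd {α : Type*} [Ortholattice α] (n : ℕ) (hn : 3 ≤ n) (a : Fin n → α) : α :=
  Finset.univ.inf fun i : Fin n => sasaki (a i) (a (i + ⟨1, by omega⟩))

/-- The Godowski identity `aₙ ≡γ a₁ = (aₙ→aₙ₋₁) ⊓ ⋯ ⊓ (a₂→a₁) ⊓ (a₁→aₙ)`. -/
def goBwd {α : Type*} [Ortholattice α] (n : ℕ) (hn : 3 ≤ n) (a : Fin n → α) : α :=
  Finset.univ.inf fun i : Fin n => sasaki (a (i + ⟨1, by omega⟩)) (a i)

section OL
variable {α : Type*} [Ortholattice α]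

private lemma ol_cc (a : α) : aᶜᶜ = a := Ortholattice.compl_compl a
private lemma ol_anti {a b : α} (h : a ≤ b) : bᶜ ≤ aᶜ := Ortholattice.compl_le_compl a b h
private lemma ol_flip {a b : α} (h : a ≤ bᶜ) : b ≤ aᶜ := by
  have := ol_anti h; rwa [ol_cc] at this

private lemma ol_dm_sup (a b : α) : (a ⊔ b)ᶜ = aᶜ ⊓ bᶜ := by
  apply le_antisymm
  · exact le_inf (ol_anti le_sup_left) (ol_anti le_sup_right)
  · exact ol_flip (sup_le (ol_flip inf_le_left) (ol_flip inf_le_right))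

private lemma ol_dm_inf (a b : α) : (a ⊓ b)ᶜ = aᶜ ⊔ bᶜ := by
  have : (aᶜ ⊔ bᶜ)ᶜ = a ⊓ b := by rw [ol_dm_sup, ol_cc, ol_cc]
  rw [← this, ol_cc]

private lemma ol_ortho_meet (hOML : ∀ a b : α, a ≤ b → a ⊔ (aᶜ ⊓ b) = b)
    {a x : α} (h : x ≤ aᶜ) : aᶜ ⊓ (a ⊔ x) = x := by
  have h1 : x ≤ aᶜ ⊓ (a ⊔ x) := le_inf h le_sup_right
  have h2 := hOML x _ h1
  have h3 : xᶜ ⊓ (aᶜ ⊓ (a ⊔ x)) = ⊥ := by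
    rw [← inf_assoc]
    have : xᶜ ⊓ aᶜ = (a ⊔ x)ᶜ := by rw [ol_dm_sup, inf_comm]
    rw [this, inf_comm, Ortholattice.inf_compl_self]
  rw [h3, sup_bot_eq] at h2
  exact h2.symm

private lemma ol_absorb (hOML : ∀ a b : α, a ≤ b → a ⊔ (aᶜ ⊓ b) = b)
    (a b : α) : a ⊓ (b ⊔ (bᶜ ⊓ aᶜ)) ≤ b := by
  set y := b ⊔ (bᶜ ⊓ aᶜ) with hy
  have key : bᶜ ≤ (a ⊓ y)ᶜ := by
    rw [ol_dm_inf]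
    have hom := hOML (aᶜ ⊓ bᶜ) bᶜ inf_le_right
    rw [← hom]
    refine sup_le (le_sup_of_le_left inf_le_left) (le_sup_of_le_right ?_)
    apply ol_flip
    rw [ol_dm_inf, ol_cc, ol_cc]
    exact sup_le le_sup_right (le_sup_of_le_left (by rw [inf_comm]))
  have := ol_flip key
  rwa [ol_cc] at this

private lemma ol_dist (hOML : ∀ a b : α, a ≤ b → a ⊔ (aᶜ ⊓ b) = b)
    {p a x : α} (h1 : x ≤ p) (h2 : x ≤ aᶜ) : p ⊓ (a ⊔ x) = x ⊔ (p ⊓ a) := by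
  have hx : x ≤ p ⊓ (a ⊔ x) := le_inf h1 le_sup_right
  have h3 := hOML x _ hx
  have h4 : xᶜ ⊓ (p ⊓ (a ⊔ x)) = p ⊓ a := by
    rw [inf_left_comm]
    congr 1
    rw [sup_comm]
    exact ol_ortho_meet hOML (ol_flip h2)
  rw [h4] at h3
  exact h3.symm

private lemma ol_inf_reindex {ι : Type*} [Fintype ι] (e : Equiv.Perm ι) (F : ι → α) :
    (Finset.univ.inf fun j => F (e j)) = Finset.univ.inf F := by
  apply le_antisymm
  · refine Finset.le_inf fun k _ => ?_
    have h := Finset.inf_le (f := fun j => F (e j)) (Finset.mem_univ (e.symm k))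
    simpa using h
  · exact Finset.le_inf fun j _ => Finset.inf_le (Finset.mem_univ (e j))

end OL

/-- In an orthomodular lattice (`n ≥ 3`), the n-Go equation holds for all
elements iff: for all `a₁, b₁, …, aₙ, bₙ` with the cyclic orthogonality
conditions `a₁ ⊥ b₁ ⊥ a₂ ⊥ b₂ ⊥ ⋯ ⊥ aₙ ⊥ bₙ ⊥ a₁`, one has
`(a₁⊔b₁) ⊓ ⋯ ⊓ (aₙ⊔bₙ) ≤ b₁ ⊔ a₂`. -/


theorem stmt_13 {α : Type*} [Ortholattice α]
    (hOML : ∀ a b : α, a ≤ b → a ⊔ (aᶜ ⊓ b) = b)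
    (n : ℕ) (hn : 3 ≤ n) :
    (∀ a : Fin n → α, goFwd n hn a = goBwd n hn a) ↔
      (∀ a b : Fin n → α,
        (∀ i : Fin n, a i ≤ (b i)ᶜ) →
        (∀ i : Fin n, b i ≤ (a (i + ⟨1, by omega⟩))ᶜ) →
        (Finset.univ.inf fun i : Fin n => a i ⊔ b i) ≤
          b ⟨0, by omega⟩ ⊔ a ⟨1, by omega⟩) := by
  haveI : NeZero n := ⟨by omega⟩
  have ho1 : (1 : ℕ) < n := by omega
  set o : Fin n := ⟨1, ho1⟩ with ho
  set z : Fin n := ⟨0, by omega⟩ with hzdef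
  have hz : z = 0 := by
    apply Fin.ext; simp [hzdef]
  have hzo : z + o = o := by rw [hz, zero_add]
  constructor
  · -- n-Go implies the orthogonality condition
    intro hGo a b h1 h2
    have hb1 : ∀ i, b i ≤ (a i)ᶜ := fun i => ol_flip (h1 i)
    set e := Finset.univ.inf (fun i : Fin n => a i ⊔ b i) with hedef
    have he : e ≤ goFwd n hn (fun i => (a i)ᶜ) := by
      refine Finset.le_inf fun i _ => le_trans (Finset.inf_le (Finset.mem_univ i)) ?_
      show a i ⊔ b i ≤ sasaki ((a i)ᶜ) ((a (i + o))ᶜ)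
      unfold sasaki
      rw [ol_cc]
      exact sup_le le_sup_left (le_sup_of_le_right (le_inf (hb1 i) (h2 i)))
    rw [hGo] at he
    have he3 : e ≤ sasaki ((a (z + o))ᶜ) ((a z)ᶜ) :=
      le_trans he (Finset.inf_le (Finset.mem_univ z))
    rw [hzo] at he3
    have he4 : e ≤ a o ⊔ ((a o)ᶜ ⊓ (a z)ᶜ) := by
      unfold sasaki at he3; rwa [ol_cc] at he3
    have he5 : e ≤ a z ⊔ b z := Finset.inf_le (Finset.mem_univ z)
    set p := a o ⊔ ((a o)ᶜ ⊓ (a z)ᶜ) with hp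
    have hbzo : b z ≤ (a o)ᶜ := by have := h2 z; rwa [hzo] at this
    have hbz_p : b z ≤ p := le_sup_of_le_right (le_inf hbzo (hb1 z))
    have hdist : p ⊓ (a z ⊔ b z) = b z ⊔ (p ⊓ a z) := ol_dist hOML hbz_p (hb1 z)
    have hfin : p ⊓ a z ≤ a o := by
      rw [inf_comm]; exact ol_absorb hOML (a z) (a o)
    calc e ≤ p ⊓ (a z ⊔ b z) := le_inf he4 he5
      _ = b z ⊔ (p ⊓ a z) := hdist
      _ ≤ b z ⊔ a o := sup_le_sup_left hfin _
  · -- orthogonality condition implies n-Go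
    intro hO
    have key : ∀ a : Fin n → α, goFwd n hn a ≤ sasaki (a o) (a z) := by
      intro a
      have h := hO (fun i => (a i)ᶜ) (fun i => a i ⊓ a (i + o))
        (fun i => ol_anti inf_le_left)
        (fun i => by rw [ol_cc]; exact inf_le_right)
      simp only [hzo] at h
      calc goFwd n hn a
          = Finset.univ.inf (fun i : Fin n => (a i)ᶜ ⊔ (a i ⊓ a (i + o))) := rfl
        _ ≤ (a z ⊓ a o) ⊔ (a o)ᶜ := h
        _ = sasaki (a o) (a z) := by unfold sasaki; rw [sup_comm, inf_comm]
    have fwd_le_bwd : ∀ a : Fin n → α, goFwd n hn a ≤ goBwd n hn a := by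
      intro a
      refine Finset.le_inf fun i _ => ?_
      have hk := key (fun j => a (j + i))
      have hshift : goFwd n hn (fun j => a (j + i)) = goFwd n hn a := by
        unfold goFwd
        rw [← ol_inf_reindex (Equiv.addRight i) (fun k => sasaki (a k) (a (k + o)))]
        refine Finset.inf_congr rfl (fun j _ => ?_)
        show sasaki (a (j + i)) (a (j + o + i)) = sasaki (a (j + i)) (a (j + i + o))
        rw [add_right_comm]
      rw [hshift] at hk
      have e1 : o + i = i + o := add_comm _ _
      have e2 : z + i = i := by rw [hz, zero_add]
      rw [e1, e2] at hk
      exact hk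
    intro a
    refine le_antisymm (fwd_le_bwd a) ?_
    set σ : Equiv.Perm (Fin n) :=
      Function.Involutive.toPerm (fun j => -j - o) (fun j => by simp) with hσ
    have hσapp : ∀ j : Fin n, σ j = -j - o := fun j => rfl
    have hrev1 : goBwd n hn a = goFwd n hn (fun j => a (-j)) := by
      unfold goFwd goBwd
      rw [← ol_inf_reindex σ (fun k => sasaki (a (k + o)) (a k))]
      refine Finset.inf_congr rfl (fun j _ => ?_)
      have e1 : σ j + o = -j := by rw [hσapp]; abel
      have e2 : σ j = -(j + o) := by rw [hσapp]; abel
      show sasaki (a (σ j + o)) (a (σ j)) = sasaki (a (-j)) (a (-(j + o)))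
      rw [e1, e2]
    have hrev2 : goBwd n hn (fun j => a (-j)) = goFwd n hn a := by
      unfold goFwd goBwd
      rw [← ol_inf_reindex σ (fun k => sasaki (a k) (a (k + o)))]
      refine Finset.inf_congr rfl (fun j _ => ?_)
      have e1 : σ j + o = -j := by rw [hσapp]; abel
      have e2 : σ j = -(j + o) := by rw [hσapp]; abel
      show sasaki (a (-(j + o))) (a (-j)) = sasaki (a (σ j)) (a (σ j + o))
      rw [e1, e2]
    calc goBwd n hn a = goFwd n hn (fun j => a (-j)) := hrev1
      _ ≤ goBwd n hn (fun j => a (-j)) := fwd_le_bwd _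
      _ = goFwd n hn a := hrev2
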